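/- Let {Y_t}_{t∈ℤ} be a stationary sequence of mean-zero jointly Gaussian ℝ^p-valued random vectors satisfying Assumptions (A2) and (A3) with γ1 ≤ C0·√(r(Σ0)) and γ3 ≤ C0 for some constant C0 > 0, where Σ0 := E Y_1 Y_1ᵀ, Σ_m := E Y_1 Y_{1+m}ᵀ and r(Σ0) := Tr(Σ0)/‖Σ0‖. Then there exist constants C, C′ > 0 depending only on ε and C0 such that for all integers m ≥ 1: ‖Σ_m‖ ≤ C·‖Σ0‖·exp(−γ4(m−1)) and ‖Σ_m‖_* ≤ C′·Tr(Σ0)·exp(−γ2(m−1)), where ‖·‖_* is the nuclear norm. -/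

import Mathlib

open MeasureTheory ProbabilityTheory Real Filter
open scoped BigOperators ENNReal NNReal Matrix

noncomputable section

namespace AutoCov

variable {Ω : Type*} [MeasurableSpace Ω]

/-- The sub-Gaussian (ψ₂) norm of a real random variable. -/
def psi2 (μ : Measure Ω) (X : Ω → ℝ) : ℝ :=
  sInf {k : ℝ | 0 < k ∧ ∫ ω, (Real.exp ((|X ω| / k) ^ 2) - 1) ∂μ ≤ 1}

/-- The L(q) norm of a real random variable. -/
def Lq (μ : Measure Ω) (q : ℝ) (X : Ω → ℝ) : ℝ :=
  (∫ ω, |X ω| ^ q ∂μ) ^ (1 / q)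

/-- Euclidean dot product on `Fin p → ℝ`. -/
def dotp {p : ℕ} (u v : Fin p → ℝ) : ℝ := ∑ i, u i * v i

/-- Euclidean norm on `Fin p → ℝ`. -/
def vnorm {p : ℕ} (v : Fin p → ℝ) : ℝ := Real.sqrt (∑ i, v i ^ 2)

/-- Spectral (ℓ₂ operator) norm of a rectangular real matrix. -/
def specNorm {m n : ℕ} (A : Matrix (Fin m) (Fin n) ℝ) : ℝ :=
  sSup {x : ℝ | ∃ u : Fin n → ℝ, vnorm u ≤ 1 ∧ x = vnorm (A.mulVec u)}

/-- Largest eigenvalue of a symmetric matrix (Rayleigh quotient formulation). -/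
def lamMax {n : ℕ} (A : Matrix (Fin n) (Fin n) ℝ) : ℝ :=
  sSup {x : ℝ | ∃ u : Fin n → ℝ, vnorm u = 1 ∧ x = dotp u (A.mulVec u)}

/-- Nuclear norm of a matrix, via duality with the spectral norm. -/
def nucNorm {m n : ℕ} (A : Matrix (Fin m) (Fin n) ℝ) : ℝ :=
  sSup {x : ℝ | ∃ B : Matrix (Fin m) (Fin n) ℝ, specNorm B ≤ 1 ∧ x = Matrix.trace (Aᵀ * B)}

/-- Entrywise expectation of a random matrix. -/
def matExp {m n : ℕ} (μ : Measure Ω) (A : Ω → Matrix (Fin m) (Fin n) ℝ) :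
    Matrix (Fin m) (Fin n) ℝ :=
  Matrix.of fun i j => ∫ ω, A ω i j ∂μ

/-- The lag-`m` sample autocovariance matrix built from observations `Y 1, …, Y n`. -/
def sampleAutocov {p : ℕ} (Y : ℤ → Ω → Fin p → ℝ) (n m : ℕ) (ω : Ω) :
    Matrix (Fin p) (Fin p) ℝ :=
  ((n : ℝ) - m)⁻¹ •
    ∑ i ∈ Finset.range (n - m), Matrix.vecMulVec (Y ((i : ℤ) + 1) ω) (Y ((i : ℤ) + 1 + m) ω)

/-- Assumption (A1): `κ1` is the (finite) supremum of ψ₂ norms of projections on the unit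
sphere and `κs` the supremum over sign vectors. -/
def A1 {p : ℕ} (μ : Measure Ω) (Y : ℤ → Ω → Fin p → ℝ) (κ1 κs : ℝ) : Prop :=
  IsLUB {x : ℝ | ∃ (t : ℤ) (u : Fin p → ℝ), vnorm u = 1 ∧
      x = psi2 μ (fun ω => dotp u (Y t ω))} κ1 ∧
  IsLUB {x : ℝ | ∃ (t : ℤ) (v : Fin p → ℝ), (∀ i, v i = 1 ∨ v i = -1) ∧
      x = psi2 μ (fun ω => dotp v (Y t ω))} κs

/-- σ-algebra generated by a family of random elements. -/
def seqSigma {ι E : Type*} [MeasurableSpace E] (f : ι → Ω → E) : MeasurableSpace Ω :=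
  MeasurableSpace.comap (fun ω i => f i ω) MeasurableSpace.pi

/-- Two families of random elements have the same (joint) distribution. -/
def identDistribFam {ι E : Type*} [MeasurableSpace E] (μ : Measure Ω) (f g : ι → Ω → E) : Prop :=
  Measure.map (fun ω i => f i ω) μ = Measure.map (fun ω i => g i ω) μ

/-- Assumption (A2): the coupling property with constants `κ1, γ1, γ2, ε`. -/
def A2 {p : ℕ} (μ : Measure Ω) (Y : ℤ → Ω → Fin p → ℝ) (κ1 γ1 γ2 ε : ℝ) : Prop :=
  ∀ j : ℤ, ∃ Yt : ℤ → Ω → Fin p → ℝ,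
    Indep (seqSigma fun t : {t : ℤ // t ≤ j} => Y t.1)
          (seqSigma fun t : {t : ℤ // j < t} => Yt t.1) μ ∧
    identDistribFam μ (fun t : {t : ℤ // j < t} => Yt t.1) (fun t : {t : ℤ // j < t} => Y t.1) ∧
    ∀ k : ℤ, j + 1 ≤ k →
      Lq μ (1 + ε) (fun ω => vnorm (fun i => Y k ω i - Yt k ω i)) ≤
        γ1 * κ1 * Real.exp (-γ2 * ((k : ℝ) - (j : ℝ) - 1))

/-- Assumption (A3): the coupling property in the direction of unit vectors, with
constants `κ1, γ3, γ4, ε`. -/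
def A3 {p : ℕ} (μ : Measure Ω) (Y : ℤ → Ω → Fin p → ℝ) (κ1 γ3 γ4 ε : ℝ) : Prop :=
  ∀ j : ℤ, ∃ Yt : ℤ → Ω → Fin p → ℝ,
    Indep (seqSigma fun t : {t : ℤ // t ≤ j} => Y t.1)
          (seqSigma fun t : {t : ℤ // j < t} => Yt t.1) μ ∧
    identDistribFam μ (fun t : {t : ℤ // j < t} => Yt t.1) (fun t : {t : ℤ // j < t} => Y t.1) ∧
    ∀ k : ℤ, j + 1 ≤ k → ∀ u : Fin p → ℝ, vnorm u = 1 →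
      Lq μ (1 + ε) (fun ω => dotp (fun i => Y k ω i - Yt k ω i) u) ≤
        γ3 * κ1 * Real.exp (-γ4 * ((k : ℝ) - (j : ℝ) - 1))

/-- Assumption (A4). -/
def A4 {p : ℕ} (μ : Measure Ω) (Y : ℤ → Ω → Fin p → ℝ) (c : ℝ) : Prop :=
  ∀ (t : ℤ) (u : Fin p → ℝ),
    (psi2 μ fun ω => dotp u (Y t ω)) ^ 2 ≤ c * ∫ ω, (dotp u (Y t ω)) ^ 2 ∂μ

/-- Mean-zero random sequence. -/
def meanZero {p : ℕ} (μ : Measure Ω) (Y : ℤ → Ω → Fin p → ℝ) : Prop :=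
  ∀ t i, ∫ ω, Y t ω i ∂μ = 0

/-- (Strict) stationarity of the sequence. -/
def stationary {p : ℕ} (μ : Measure Ω) (Y : ℤ → Ω → Fin p → ℝ) : Prop :=
  ∀ s : ℤ, identDistribFam μ (fun t : ℤ => Y (t + s)) (fun t : ℤ => Y t)

/-- Second-order stationarity: means and autocovariances are shift invariant. -/
def secondOrderStationary {p : ℕ} (μ : Measure Ω) (Y : ℤ → Ω → Fin p → ℝ) : Prop :=
  (∀ (t : ℤ) i, ∫ ω, Y t ω i ∂μ = ∫ ω, Y 0 ω i ∂μ) ∧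
  ∀ (t s m : ℤ), matExp μ (fun ω => Matrix.vecMulVec (Y t ω) (Y (t + m) ω)) =
    matExp μ (fun ω => Matrix.vecMulVec (Y s ω) (Y (s + m) ω))

/-- The sequence is a centered jointly Gaussian sequence: every finite linear combination
of coordinates is a centered Gaussian real random variable. -/
def gaussianSeq {p : ℕ} (μ : Measure Ω) (Y : ℤ → Ω → Fin p → ℝ) : Prop :=
  ∀ (s : Finset (ℤ × Fin p)) (a : ℤ × Fin p → ℝ), ∃ v : ℝ≥0,
    Measure.map (fun ω => ∑ tk ∈ s, a tk * Y tk.1 ω tk.2) μ = gaussianReal 0 v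

instance matrixMeasurableSpace {m n : ℕ} : MeasurableSpace (Matrix (Fin m) (Fin n) ℝ) :=
  MeasurableSpace.pi

/-- `g` is 1-Lipschitz on tuples for the ℓ¹-sum of the norm-like function `N`. -/
def LipSum {ι E : Type*} [Fintype ι] [Sub E] (N : E → ℝ) (g : (ι → E) → ℝ) : Prop :=
  ∀ x y : ι → E, |g x - g y| ≤ ∑ j, N (x j - y j)

/-- τ-measure of dependence between a σ-algebra `A` and a finite family `X` of random
elements, relative to the norm-like function `N`. -/
def tauFam {ι E : Type*} [Fintype ι] [MeasurableSpace E] [Sub E]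
    (μ : Measure Ω) (A : MeasurableSpace Ω) (N : E → ℝ) (X : ι → Ω → E) : ℝ :=
  ∫ ω, sSup {r : ℝ | ∃ g : (ι → E) → ℝ, LipSum N g ∧
      r = (μ[(fun ω' => g fun j => X j ω') | A]) ω - ∫ ω', g (fun j => X j ω') ∂μ} ∂μ

/-- τ-mixing coefficient of the sequence `X` at lag `k`. -/
def tauMix {E : Type*} [MeasurableSpace E] [Sub E]
    (μ : Measure Ω) (N : E → ℝ) (X : ℤ → Ω → E) (k : ℕ) : ℝ :=
  sSup {r : ℝ | ∃ ℓ : ℕ, 0 < ℓ ∧ ∃ (a : ℤ) (js : Fin ℓ → ℤ), StrictMono js ∧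
      (∀ i, a + (k : ℤ) ≤ js i) ∧
      r = (ℓ : ℝ)⁻¹ * tauFam μ (seqSigma fun t : {t : ℤ // t ≤ a} => X t.1) N fun i => X (js i)}

/-- Matrix exponential. -/
def mexp {n : ℕ} (A : Matrix (Fin n) (Fin n) ℝ) : Matrix (Fin n) (Fin n) ℝ :=
  ∑' k : ℕ, ((k.factorial : ℝ))⁻¹ • A ^ k

/-- Spectral radius of a real square matrix (over its complex eigenvalues). -/
def specRad {n : ℕ} (A : Matrix (Fin n) (Fin n) ℝ) : ℝ :=
  sSup {r : ℝ | ∃ z : ℂ, z ∈ spectrum ℂ (A.map (algebraMap ℝ ℂ)) ∧ r = ‖z‖}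

/-- Truncation of a matrix at spectral-norm level `M`. -/
def trunc {m n : ℕ} (M : ℝ) (A : Matrix (Fin m) (Fin n) ℝ) : Matrix (Fin m) (Fin n) ℝ :=
  (min M (specNorm A) / specNorm A) • A

/-- The auxiliary function h(x) = x⁻²(eˣ - x - 1). -/
def hfun (x : ℝ) : ℝ := (Real.exp x - x - 1) / x ^ 2

/-! ### Auxiliary lemmas -/

section AuxLemmas

variable {μ : Measure Ω}

lemma Lq_nonneg (q : ℝ) (X : Ω → ℝ) : 0 ≤ Lq μ q X :=
  Real.rpow_nonneg (integral_nonneg fun ω => Real.rpow_nonneg (abs_nonneg _) _) _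

lemma vnorm_nonneg' {p : ℕ} (v : Fin p → ℝ) : 0 ≤ vnorm v := Real.sqrt_nonneg _

lemma abs_le_vnorm {p : ℕ} (v : Fin p → ℝ) (i : Fin p) : |v i| ≤ vnorm v := by
  have h : v i ^ 2 ≤ ∑ k, v k ^ 2 :=
    Finset.single_le_sum (fun k _ => sq_nonneg (v k)) (Finset.mem_univ i)
  calc |v i| = Real.sqrt (v i ^ 2) := (Real.sqrt_sq_eq_abs _).symm
  _ ≤ vnorm v := Real.sqrt_le_sqrt h

lemma vnorm_le_sum_abs {p : ℕ} (v : Fin p → ℝ) : vnorm v ≤ ∑ i, |v i| := by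
  have h1 : ∑ i, v i ^ 2 ≤ (∑ i, |v i|) ^ 2 := by
    calc ∑ i, v i ^ 2 = ∑ i, |v i| ^ 2 := by simp [sq_abs]
    _ ≤ (∑ i, |v i|) ^ 2 := Finset.sum_sq_le_sq_sum_of_nonneg fun i _ => abs_nonneg _
  calc vnorm v ≤ Real.sqrt ((∑ i, |v i|) ^ 2) := Real.sqrt_le_sqrt h1
  _ = ∑ i, |v i| := Real.sqrt_sq (Finset.sum_nonneg fun i _ => abs_nonneg _)

lemma vnorm_single {p : ℕ} (j : Fin p) : vnorm (Pi.single j (1 : ℝ)) = 1 := by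
  have h : ∑ i : Fin p, ((Pi.single j (1 : ℝ) : Fin p → ℝ) i) ^ 2 = (1 : ℝ) := by
    have h2 : ∀ i : Fin p, ((Pi.single j (1 : ℝ) : Fin p → ℝ) i) ^ 2
        = if i = j then (1 : ℝ) else 0 := by
      intro i
      by_cases h : i = j <;> simp [Pi.single_apply, h]
    simp [h2]
  rw [vnorm, h, Real.sqrt_one]

lemma vnorm_mulVec_le {m n : ℕ} (A : Matrix (Fin m) (Fin n) ℝ) (u : Fin n → ℝ)
    (hu : vnorm u ≤ 1) : vnorm (A.mulVec u) ≤ ∑ i, ∑ j, |A i j| := by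
  refine (vnorm_le_sum_abs _).trans (Finset.sum_le_sum fun i _ => ?_)
  calc |A.mulVec u i| = |∑ j, A i j * u j| := rfl
  _ ≤ ∑ j, |A i j * u j| := Finset.abs_sum_le_sum_abs _ _
  _ ≤ ∑ j, |A i j| := by
      refine Finset.sum_le_sum fun j _ => ?_
      rw [abs_mul]
      exact mul_le_of_le_one_right (abs_nonneg _) ((abs_le_vnorm u j).trans hu)

lemma specSet_bddAbove {m n : ℕ} (A : Matrix (Fin m) (Fin n) ℝ) :
    BddAbove {x : ℝ | ∃ u : Fin n → ℝ, vnorm u ≤ 1 ∧ x = vnorm (A.mulVec u)} := by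
  refine ⟨∑ i, ∑ j, |A i j|, ?_⟩
  rintro x ⟨u, hu, rfl⟩
  exact vnorm_mulVec_le A u hu

lemma specNorm_nonneg {m n : ℕ} (A : Matrix (Fin m) (Fin n) ℝ) : 0 ≤ specNorm A := by
  have h0 : vnorm (0 : Fin n → ℝ) ≤ 1 := by
    rw [vnorm]; simp
  refine (vnorm_nonneg' (A.mulVec 0)).trans (le_csSup (specSet_bddAbove A) ⟨0, h0, rfl⟩)

lemma specNorm_le {m n : ℕ} (A : Matrix (Fin m) (Fin n) ℝ) (b : ℝ) (hb : 0 ≤ b)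
    (h : ∀ u, vnorm u ≤ 1 → vnorm (A.mulVec u) ≤ b) : specNorm A ≤ b :=
  Real.sSup_le (by rintro x ⟨u, hu, rfl⟩; exact h u hu) hb

lemma specNorm_le_sum_abs {m n : ℕ} (A : Matrix (Fin m) (Fin n) ℝ) :
    specNorm A ≤ ∑ i, ∑ j, |A i j| :=
  specNorm_le A _ (Finset.sum_nonneg fun _ _ => Finset.sum_nonneg fun _ _ => abs_nonneg _)
    (vnorm_mulVec_le A)

lemma abs_entry_le_specNorm {m n : ℕ} (A : Matrix (Fin m) (Fin n) ℝ) (i : Fin m) (j : Fin n) :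
    |A i j| ≤ specNorm A := by
  have h1 : |A i j| ≤ vnorm (A.mulVec (Pi.single j 1)) := by
    have h2 : A.mulVec (Pi.single j 1) i = A i j := by
      rw [Matrix.mulVec_single]; exact mul_one _
    rw [← h2]; exact abs_le_vnorm _ i
  exact h1.trans (le_csSup (specSet_bddAbove A) ⟨Pi.single j 1, le_of_eq (vnorm_single j), rfl⟩)

lemma nucNorm_le_sum_abs {m n : ℕ} (A : Matrix (Fin m) (Fin n) ℝ) :
    nucNorm A ≤ ∑ i, ∑ j, |A i j| := by
  refine Real.sSup_le ?_
    (Finset.sum_nonneg fun _ _ => Finset.sum_nonneg fun _ _ => abs_nonneg _)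
  rintro x ⟨B, hB, rfl⟩
  have htr : Matrix.trace (Aᵀ * B) = ∑ j, ∑ i, A i j * B i j := by
    simp [Matrix.trace, Matrix.diag, Matrix.mul_apply, Matrix.transpose_apply]
  rw [htr, Finset.sum_comm]
  calc ∑ i, ∑ j, A i j * B i j ≤ ∑ i, ∑ j, |A i j| := by
        refine Finset.sum_le_sum fun i _ => Finset.sum_le_sum fun j _ => ?_
        calc A i j * B i j ≤ |A i j * B i j| := le_abs_self _
        _ = |A i j| * |B i j| := abs_mul _ _
        _ ≤ |A i j| * 1 := by
            refine mul_le_mul_of_nonneg_left ?_ (abs_nonneg _)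
            exact (abs_entry_le_specNorm B i j).trans hB
        _ = |A i j| := mul_one _

lemma aemeasurable_pi_fam {ι β : Type*} [Countable ι] [MeasurableSpace β]
    (f : ι → Ω → β) (hf : ∀ i, AEMeasurable (f i) μ) :
    AEMeasurable (fun ω (i : ι) => f i ω) μ := by
  refine ⟨fun ω i => (hf i).mk _ ω, measurable_pi_lambda _ fun i => (hf i).measurable_mk, ?_⟩
  filter_upwards [ae_all_iff.mpr fun i => (hf i).ae_eq_mk] with ω hω
  funext i; exact hω i

lemma integrable_abs_rpow_mul_exp {r b : ℝ} (hr : 0 < r) (hb : 0 < b) :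
    Integrable (fun x : ℝ => |x| ^ r * Real.exp (-b * x ^ 2)) := by
  have hmeas : AEStronglyMeasurable (fun x : ℝ => |x| ^ r * Real.exp (-b * x ^ 2)) volume := by
    apply Continuous.aestronglyMeasurable
    exact (continuous_abs.rpow_const fun x => Or.inr hr.le).mul
      (Real.continuous_exp.comp (by continuity))
  have hbase : Integrable (fun x : ℝ => Real.exp (r ^ 2 / (2 * b)) *
      Real.exp (-(b / 2) * x ^ 2)) volume :=
    (integrable_exp_neg_mul_sq (half_pos hb)).const_mul _
  refine hbase.mono' hmeas (ae_of_all _ fun x => ?_)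
  have hfx : (0 : ℝ) ≤ |x| ^ r * Real.exp (-b * x ^ 2) :=
    mul_nonneg (Real.rpow_nonneg (abs_nonneg x) r) (Real.exp_pos _).le
  rw [Real.norm_eq_abs, abs_of_nonneg hfx]
  have h1 : |x| ^ r ≤ Real.exp (r * |x|) := by
    rcases eq_or_lt_of_le (abs_nonneg x) with h | h
    · rw [← h, Real.zero_rpow hr.ne']
      positivity
    · rw [Real.rpow_def_of_pos h]
      refine Real.exp_le_exp.mpr ?_
      have hlog : Real.log |x| ≤ |x| := (Real.log_le_sub_one_of_pos h).trans (by linarith)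
      calc Real.log |x| * r ≤ |x| * r := mul_le_mul_of_nonneg_right hlog hr.le
      _ = r * |x| := mul_comm _ _
  calc |x| ^ r * Real.exp (-b * x ^ 2)
      ≤ Real.exp (r * |x|) * Real.exp (-b * x ^ 2) :=
        mul_le_mul_of_nonneg_right h1 (Real.exp_pos _).le
  _ = Real.exp (r * |x| + -b * x ^ 2) := (Real.exp_add _ _).symm
  _ ≤ Real.exp (r ^ 2 / (2 * b) + -(b / 2) * x ^ 2) := by
      refine Real.exp_le_exp.mpr ?_
      have hx2 : x ^ 2 = |x| ^ 2 := (sq_abs x).symm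
      rw [hx2]
      have hb' : (0:ℝ) < 2 * b := by linarith
      have h2 : r ^ 2 / (2 * b) * (2 * b) = r ^ 2 := div_mul_cancel₀ _ hb'.ne'
      nlinarith [sq_nonneg (b * |x| - r), hb', h2]
  _ = Real.exp (r ^ 2 / (2 * b)) * Real.exp (-(b / 2) * x ^ 2) := Real.exp_add _ _

lemma integrable_abs_rpow_gaussian {r : ℝ} (hr : 0 < r) (v : ℝ≥0) :
    Integrable (fun x : ℝ => |x| ^ r) (gaussianReal 0 v) := by
  have hm : Measurable fun x : ℝ => |x| ^ r :=
    (continuous_abs.rpow_const fun x => Or.inr hr.le).measurable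
  by_cases hv : v = 0
  · subst hv
    rw [gaussianReal_zero_var]
    refine ⟨hm.aestronglyMeasurable, ?_⟩
    rw [HasFiniteIntegral, lintegral_dirac' _ (by measurability)]
    exact ENNReal.coe_lt_top
  · rw [gaussianReal_of_var_ne_zero _ hv,
      integrable_withDensity_iff (measurable_gaussianPDF _ _)
        (ae_of_all _ fun x => ENNReal.ofReal_lt_top)]
    have hvpos : (0 : ℝ) < (v : ℝ) := NNReal.coe_pos.mpr (pos_iff_ne_zero.mpr hv)
    have heq : (fun x : ℝ => |x| ^ r * (gaussianPDF 0 v x).toReal)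
        = fun x => (Real.sqrt (2 * π * v))⁻¹ * (|x| ^ r * Real.exp (-(2 * (v : ℝ))⁻¹ * x ^ 2)) := by
      funext x
      rw [gaussianPDF, ENNReal.toReal_ofReal (gaussianPDFReal_nonneg _ _ _), gaussianPDFReal]
      have harg : -(x - 0) ^ 2 / (2 * (v : ℝ)) = -(2 * (v : ℝ))⁻¹ * x ^ 2 := by
        rw [sub_zero]; ring
      rw [harg]; ring
    rw [heq]
    exact (integrable_abs_rpow_mul_exp hr (by positivity)).const_mul _

lemma memLp_gaussian [IsProbabilityMeasure μ] {X : Ω → ℝ} {v : ℝ≥0} (hXm : AEMeasurable X μ)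
    (hX : Measure.map X μ = gaussianReal 0 v) {r : ℝ} (hr : 0 < r) :
    MemLp X (ENNReal.ofReal r) μ := by
  have hm : Measurable fun x : ℝ => |x| ^ r :=
    (continuous_abs.rpow_const fun x => Or.inr hr.le).measurable
  have hint : Integrable (fun ω => |X ω| ^ r) μ := by
    have h2 : Integrable ((fun x : ℝ => |x| ^ r) ∘ X) μ :=
      (integrable_map_measure (by rw [hX]; exact hm.aestronglyMeasurable) hXm).mp
        (by rw [hX]; exact integrable_abs_rpow_gaussian hr v)
    exact h2
  have h0 : ENNReal.ofReal r ≠ 0 := by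
    simp only [ne_eq, ENNReal.ofReal_eq_zero, not_le]
    exact hr
  have htop : ENNReal.ofReal r ≠ ⊤ := ENNReal.ofReal_ne_top
  have h2 : MemLp (fun ω => ‖X ω‖ ^ (ENNReal.ofReal r).toReal)
      (ENNReal.ofReal r / ENNReal.ofReal r) μ := by
    rw [ENNReal.div_self h0 htop, memLp_one_iff_integrable]
    simpa [Real.norm_eq_abs, ENNReal.toReal_ofReal hr.le] using hint
  exact (memLp_norm_rpow_iff hXm.aestronglyMeasurable h0 htop).mp h2

lemma integrable_mul_of_memL2 {f g : Ω → ℝ} (hf : MemLp f 2 μ) (hg : MemLp g 2 μ) :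
    Integrable (fun ω => f ω * g ω) μ := by
  refine (hf.integrable_sq.add hg.integrable_sq).mono' (hf.1.mul hg.1) (ae_of_all _ fun ω => ?_)
  simp only [Pi.add_apply]
  rw [Real.norm_eq_abs, abs_mul]
  nlinarith [sq_nonneg (|f ω| - |g ω|), sq_abs (f ω), sq_abs (g ω), abs_nonneg (f ω),
    abs_nonneg (g ω)]

end AuxLemmas

section MainAux

variable {μ : Measure Ω}

lemma coord_identDistrib {p : ℕ} [IsProbabilityMeasure μ] (Y Yt : ℤ → Ω → Fin p → ℝ)
    (haemY : ∀ (t : ℤ) (i : Fin p), AEMeasurable (fun ω => Y t ω i) μ)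
    (hid : identDistribFam μ (fun t : {t : ℤ // 1 < t} => Yt t.1)
      (fun t : {t : ℤ // 1 < t} => Y t.1))
    (k : ℤ) (hk : 1 < k) (i : Fin p) :
    IdentDistrib (fun ω => Yt k ω i) (fun ω => Y k ω i) μ μ := by
  have hFY : AEMeasurable (fun ω (t : {t : ℤ // 1 < t}) => Y t.1 ω) μ :=
    aemeasurable_pi_fam _ fun t => aemeasurable_pi_fam _ fun i' => haemY t.1 i'
  have hid' : Measure.map (fun ω (t : {t : ℤ // 1 < t}) => Yt t.1 ω) μ
      = Measure.map (fun ω (t : {t : ℤ // 1 < t}) => Y t.1 ω) μ := hid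
  have hFYt : AEMeasurable (fun ω (t : {t : ℤ // 1 < t}) => Yt t.1 ω) μ := by
    by_contra hc
    rw [Measure.map_of_not_aemeasurable hc] at hid'
    haveI := Measure.isProbabilityMeasure_map hFY
    have h0 := congrArg (fun m : Measure ({t : ℤ // 1 < t} → (Fin p → ℝ)) => m Set.univ) hid'
    simp [measure_univ] at h0
  have hev : Measurable fun x : {t : ℤ // 1 < t} → (Fin p → ℝ) => x ⟨k, hk⟩ i :=
    (measurable_pi_apply i).comp (measurable_pi_apply _)
  refine ⟨hev.comp_aemeasurable hFYt, hev.comp_aemeasurable hFY, ?_⟩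
  calc Measure.map (fun ω => Yt k ω i) μ
      = Measure.map ((fun x : {t : ℤ // 1 < t} → (Fin p → ℝ) => x ⟨k, hk⟩ i)
        ∘ (fun ω (t : {t : ℤ // 1 < t}) => Yt t.1 ω)) μ := rfl
  _ = Measure.map (fun x : {t : ℤ // 1 < t} → (Fin p → ℝ) => x ⟨k, hk⟩ i)
      (Measure.map (fun ω (t : {t : ℤ // 1 < t}) => Yt t.1 ω) μ) :=
      (AEMeasurable.map_map_of_aemeasurable hev.aemeasurable hFYt).symm
  _ = Measure.map (fun x : {t : ℤ // 1 < t} → (Fin p → ℝ) => x ⟨k, hk⟩ i)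
      (Measure.map (fun ω (t : {t : ℤ // 1 < t}) => Y t.1 ω) μ) := by rw [hid']
  _ = Measure.map (fun ω => Y k ω i) μ :=
      AEMeasurable.map_map_of_aemeasurable hev.aemeasurable hFY

lemma coord_indepFun {p : ℕ} (Y Yt : ℤ → Ω → Fin p → ℝ)
    (hind : Indep (seqSigma fun t : {t : ℤ // t ≤ 1} => Y t.1)
      (seqSigma fun t : {t : ℤ // 1 < t} => Yt t.1) μ)
    (k : ℤ) (hk : 1 < k) (i j : Fin p) :
    IndepFun (fun ω => Y 1 ω i) (fun ω => Yt k ω j) μ := by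
  rw [IndepFun_iff_Indep]
  have h1 : MeasurableSpace.comap (fun ω => Y 1 ω i) inferInstance
      ≤ seqSigma fun t : {t : ℤ // t ≤ 1} => Y t.1 := by
    have heq : (fun ω => Y 1 ω i)
        = (fun x : {t : ℤ // t ≤ 1} → (Fin p → ℝ) => x ⟨1, le_refl 1⟩ i)
          ∘ (fun ω (t : {t : ℤ // t ≤ 1}) => Y t.1 ω) := rfl
    rw [heq, ← MeasurableSpace.comap_comp]
    have hev : Measurable (fun x : {t : ℤ // t ≤ 1} → (Fin p → ℝ) => x ⟨1, le_refl 1⟩ i) :=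
      (measurable_pi_apply i).comp (measurable_pi_apply _)
    exact MeasurableSpace.comap_mono hev.comap_le
  have h2 : MeasurableSpace.comap (fun ω => Yt k ω j) inferInstance
      ≤ seqSigma fun t : {t : ℤ // 1 < t} => Yt t.1 := by
    have heq : (fun ω => Yt k ω j)
        = (fun x : {t : ℤ // 1 < t} → (Fin p → ℝ) => x ⟨k, hk⟩ j)
          ∘ (fun ω (t : {t : ℤ // 1 < t}) => Yt t.1 ω) := rfl
    rw [heq, ← MeasurableSpace.comap_comp]
    have hev : Measurable (fun x : {t : ℤ // 1 < t} → (Fin p → ℝ) => x ⟨k, hk⟩ j) :=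
      (measurable_pi_apply j).comp (measurable_pi_apply _)
    exact MeasurableSpace.comap_mono hev.comap_le
  exact indep_of_indep_of_le_left (indep_of_indep_of_le_right hind h2) h1

lemma entry_est {p : ℕ} [IsProbabilityMeasure μ] (Y Yt : ℤ → Ω → Fin p → ℝ)
    {ε q' : ℝ} (hε : 0 < ε) (hpq : Real.HolderConjugate q' (1 + ε))
    (haemY : ∀ (t : ℤ) (i : Fin p), AEMeasurable (fun ω => Y t ω i) μ)
    (hmemLp : ∀ (t : ℤ) (i : Fin p) (r : ℝ), 0 < r →
      MemLp (fun ω => Y t ω i) (ENNReal.ofReal r) μ)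
    (hmem2 : ∀ (t : ℤ) (i : Fin p), MemLp (fun ω => Y t ω i) 2 μ)
    (hmean : meanZero μ Y)
    (hind : Indep (seqSigma fun t : {t : ℤ // t ≤ 1} => Y t.1)
      (seqSigma fun t : {t : ℤ // 1 < t} => Yt t.1) μ)
    (hid : identDistribFam μ (fun t : {t : ℤ // 1 < t} => Yt t.1)
      (fun t : {t : ℤ // 1 < t} => Y t.1))
    (k : ℤ) (hk : 1 < k) (i j : Fin p)
    (g : Ω → ℝ) (hg0 : ∀ ω, 0 ≤ g ω)
    (hgle : ∀ ω, |Y k ω j - Yt k ω j| ≤ g ω)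
    (hgmem : MemLp g (ENNReal.ofReal (1 + ε)) μ) :
    |∫ ω, Y 1 ω i * Y k ω j ∂μ| ≤ Lq μ q' (fun ω => Y 1 ω i) * Lq μ (1 + ε) g := by
  have hε1 : (0 : ℝ) < 1 + ε := by linarith
  have hIDj := coord_identDistrib Y Yt haemY hid k hk
  have hYtaem : ∀ i' : Fin p, AEMeasurable (fun ω => Yt k ω i') μ := fun i' =>
    (hIDj i').aemeasurable_fst
  have hYtmem2 : MemLp (fun ω => Yt k ω j) 2 μ := (hIDj j).symm.memLp_snd (hmem2 k j)
  have hYtmemLp : MemLp (fun ω => Yt k ω j) (ENNReal.ofReal (1 + ε)) μ :=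
    (hIDj j).symm.memLp_snd (hmemLp k j _ hε1)
  have hZmem : MemLp (fun ω => Y k ω j - Yt k ω j) (ENNReal.ofReal (1 + ε)) μ :=
    (hmemLp k j _ hε1).sub hYtmemLp
  have hint1 : Integrable (fun ω => Y 1 ω i * Y k ω j) μ :=
    integrable_mul_of_memL2 (hmem2 1 i) (hmem2 k j)
  have hint2 : Integrable (fun ω => Y 1 ω i * Yt k ω j) μ :=
    integrable_mul_of_memL2 (hmem2 1 i) hYtmem2
  have hzero : ∫ ω, Y 1 ω i * Yt k ω j ∂μ = 0 := by
    have h := IndepFun.integral_mul_eq_mul_integral (coord_indepFun Y Yt hind k hk i j)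
      (haemY 1 i).aestronglyMeasurable (hYtaem j).aestronglyMeasurable
    have hXzero : ∫ ω, Y 1 ω i ∂μ = 0 := hmean 1 i
    simpa [Pi.mul_apply, hXzero] using h
  have hsplit : ∫ ω, Y 1 ω i * Y k ω j ∂μ
      = ∫ ω, Y 1 ω i * (Y k ω j - Yt k ω j) ∂μ := by
    have heq2 : (fun ω => Y 1 ω i * (Y k ω j - Yt k ω j))
        = fun ω => Y 1 ω i * Y k ω j - Y 1 ω i * Yt k ω j := by funext ω; ring
    rw [heq2, integral_sub hint1 hint2, hzero, sub_zero]
  rw [hsplit]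
  have hq'pos : 0 < q' := hpq.pos
  have hXabs : MemLp (fun ω => |Y 1 ω i|) (ENNReal.ofReal q') μ := by
    simpa [Real.norm_eq_abs] using (hmemLp 1 i _ hq'pos).norm
  have hZabs : MemLp (fun ω => |Y k ω j - Yt k ω j|) (ENNReal.ofReal (1 + ε)) μ := by
    simpa [Real.norm_eq_abs] using hZmem.norm
  have hH : ∫ ω, |Y 1 ω i| * |Y k ω j - Yt k ω j| ∂μ
      ≤ (∫ ω, |Y 1 ω i| ^ q' ∂μ) ^ (1 / q')
        * (∫ ω, |Y k ω j - Yt k ω j| ^ (1 + ε) ∂μ) ^ (1 / (1 + ε)) :=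
    integral_mul_le_Lp_mul_Lq_of_nonneg hpq (ae_of_all _ fun ω => abs_nonneg _)
      (ae_of_all _ fun ω => abs_nonneg _) hXabs hZabs
  have hofne : ENNReal.ofReal (1 + ε) ≠ 0 := by
    simp only [ne_eq, ENNReal.ofReal_eq_zero, not_le]; linarith
  have hZint : Integrable (fun ω => |Y k ω j - Yt k ω j| ^ (1 + ε)) μ := by
    have h := hZmem.integrable_norm_rpow hofne ENNReal.ofReal_ne_top
    simpa [Real.norm_eq_abs, ENNReal.toReal_ofReal hε1.le] using h
  have hgint : Integrable (fun ω => g ω ^ (1 + ε)) μ := by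
    have h := hgmem.integrable_norm_rpow hofne ENNReal.ofReal_ne_top
    have heq3 : (fun ω => ‖g ω‖ ^ (ENNReal.ofReal (1 + ε)).toReal)
        = fun ω => g ω ^ (1 + ε) := by
      funext ω
      rw [Real.norm_eq_abs, abs_of_nonneg (hg0 ω), ENNReal.toReal_ofReal hε1.le]
    rwa [heq3] at h
  have hmono : (∫ ω, |Y k ω j - Yt k ω j| ^ (1 + ε) ∂μ) ≤ ∫ ω, g ω ^ (1 + ε) ∂μ :=
    integral_mono hZint hgint fun ω =>
      Real.rpow_le_rpow (abs_nonneg _) (hgle ω) hε1.le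
  have hfac : (0 : ℝ) ≤ (∫ ω, |Y 1 ω i| ^ q' ∂μ) ^ (1 / q') :=
    Real.rpow_nonneg (integral_nonneg fun ω => Real.rpow_nonneg (abs_nonneg _) _) _
  calc |∫ ω, Y 1 ω i * (Y k ω j - Yt k ω j) ∂μ|
      ≤ ∫ ω, |Y 1 ω i| * |Y k ω j - Yt k ω j| ∂μ := by
        simpa [Real.norm_eq_abs, abs_mul] using
          norm_integral_le_integral_norm (fun ω => Y 1 ω i * (Y k ω j - Yt k ω j)) (μ := μ)
  _ ≤ (∫ ω, |Y 1 ω i| ^ q' ∂μ) ^ (1 / q')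
        * (∫ ω, |Y k ω j - Yt k ω j| ^ (1 + ε) ∂μ) ^ (1 / (1 + ε)) := hH
  _ ≤ (∫ ω, |Y 1 ω i| ^ q' ∂μ) ^ (1 / q') * (∫ ω, g ω ^ (1 + ε) ∂μ) ^ (1 / (1 + ε)) := by
        refine mul_le_mul_of_nonneg_left ?_ hfac
        exact Real.rpow_le_rpow
          (integral_nonneg fun ω => Real.rpow_nonneg (abs_nonneg _) _) hmono (by positivity)
  _ = Lq μ q' (fun ω => Y 1 ω i) * Lq μ (1 + ε) g := by
        have heq4 : (∫ ω, g ω ^ (1 + ε) ∂μ) = ∫ ω, |g ω| ^ (1 + ε) ∂μ := by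
          congr 1
          funext ω
          rw [abs_of_nonneg (hg0 ω)]
        rw [heq4]
        rfl

end MainAux

/-- geometric decay of autocovariances, Theorem 2.2 proof, of Han–Li:
for a stationary mean-zero Gaussian sequence satisfying (A2)–(A3) (with `κ1` replaced by
`√‖Σ₀‖`), spectral and nuclear norms of the autocovariances decay geometrically. -/
theorem gaussian_autocovariance_geometric_decay
    (μ : Measure Ω) [IsProbabilityMeasure μ]
    {p : ℕ} (hp : 0 < p) (Y : ℤ → Ω → Fin p → ℝ)
    (γ1 γ2 γ3 γ4 ε C0 : ℝ)
    (hε : 0 < ε) (hγ1 : 0 < γ1) (hγ2 : 0 < γ2) (hγ3 : 0 < γ3) (hγ4 : 0 < γ4)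
    (hstat : stationary μ Y) (hgauss : gaussianSeq μ Y) (hmean : meanZero μ Y)
    (Sig : ℕ → Matrix (Fin p) (Fin p) ℝ)
    (hSig : ∀ m : ℕ, Sig m = matExp μ fun ω => Matrix.vecMulVec (Y 1 ω) (Y (1 + (m : ℤ)) ω))
    (hA2 : A2 μ Y (Real.sqrt (specNorm (Sig 0))) γ1 γ2 ε)
    (hA3 : A3 μ Y (Real.sqrt (specNorm (Sig 0))) γ3 γ4 ε)
    (hC0 : 0 < C0)
    (hγ1C : γ1 ≤ C0 * Real.sqrt ((Sig 0).trace / specNorm (Sig 0)))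
    (hγ3C : γ3 ≤ C0) :
    ∃ C C' : ℝ, 0 < C ∧ 0 < C' ∧ ∀ m : ℕ, 1 ≤ m →
      specNorm (Sig m) ≤ C * specNorm (Sig 0) * Real.exp (-γ4 * ((m : ℝ) - 1)) ∧
      nucNorm (Sig m) ≤ C' * (Sig 0).trace * Real.exp (-γ2 * ((m : ℝ) - 1)) := by
  classical
  have hε1 : (0 : ℝ) < 1 + ε := by linarith
  have hεne : ε ≠ 0 := hε.ne'
  have hε1ne : (1 : ℝ) + ε ≠ 0 := by positivity
  have hpq : Real.HolderConjugate ((1 + ε) / ε) (1 + ε) := by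
    rw [Real.holderConjugate_iff]
    constructor
    · rw [lt_div_iff₀ hε]; linarith
    · field_simp
      ring
  have hq'pos : (0 : ℝ) < (1 + ε) / ε := by positivity
  -- coordinates are a.e. measurable with centered Gaussian laws
  have haem : ∀ (t : ℤ) (i : Fin p), AEMeasurable (fun ω => Y t ω i) μ := by
    intro t i
    obtain ⟨v, hv⟩ := hgauss {(t, i)} fun _ => 1
    simp only [Finset.sum_singleton, one_mul] at hv
    by_contra hc
    rw [Measure.map_of_not_aemeasurable hc] at hv
    have h0 := congrArg (fun m : Measure ℝ => m Set.univ) hv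
    simp [measure_univ] at h0
  have hlaw : ∀ (t : ℤ) (i : Fin p), ∃ v : ℝ≥0,
      Measure.map (fun ω => Y t ω i) μ = gaussianReal 0 v := by
    intro t i
    obtain ⟨v, hv⟩ := hgauss {(t, i)} fun _ => 1
    exact ⟨v, by simpa only [Finset.sum_singleton, one_mul] using hv⟩
  have hmemLp : ∀ (t : ℤ) (i : Fin p) (r : ℝ), 0 < r →
      MemLp (fun ω => Y t ω i) (ENNReal.ofReal r) μ := by
    intro t i r hr
    obtain ⟨v, hv⟩ := hlaw t i
    exact memLp_gaussian (haem t i) hv hr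
  have hmem2 : ∀ (t : ℤ) (i : Fin p), MemLp (fun ω => Y t ω i) 2 μ := by
    intro t i
    have h := hmemLp t i 2 (by norm_num)
    rwa [show ENNReal.ofReal (2 : ℝ) = 2 by
      rw [show (2 : ℝ) = ((2 : ℕ) : ℝ) by norm_num, ENNReal.ofReal_natCast]; norm_num] at h
  -- entries of the autocovariance matrices
  have hSig' : ∀ (m : ℕ) (i j : Fin p),
      Sig m i j = ∫ ω, Y 1 ω i * Y (1 + (m : ℤ)) ω j ∂μ := by
    intro m i j
    rw [hSig m]
    simp [matExp, Matrix.vecMulVec_apply]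
  -- the constant κ
  haveI hne : Nonempty (Fin p) := ⟨⟨0, hp⟩⟩
  set κ : ℝ := Finset.univ.sup' Finset.univ_nonempty
    (fun i : Fin p => Lq μ ((1 + ε) / ε) fun ω => Y 1 ω i) with hκdef
  have hκ : ∀ i : Fin p, Lq μ ((1 + ε) / ε) (fun ω => Y 1 ω i) ≤ κ := fun i => by
    rw [hκdef]
    exact Finset.le_sup' (fun i : Fin p => Lq μ ((1 + ε) / ε) fun ω => Y 1 ω i)
      (Finset.mem_univ i)
  have hκ0 : 0 ≤ κ := le_trans (Lq_nonneg _ _) (hκ (Classical.arbitrary _))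
  -- positivity of norm and trace
  have hNrm0 : 0 ≤ specNorm (Sig 0) := specNorm_nonneg _
  have hNrmpos : 0 < specNorm (Sig 0) := by
    rcases hNrm0.lt_or_eq with h | h
    · exact h
    · exfalso
      rw [← h, div_zero, Real.sqrt_zero, mul_zero] at hγ1C
      linarith
  have hTpos : 0 < (Sig 0).trace := by
    by_contra hT
    push_neg at hT
    have h1 : (Sig 0).trace / specNorm (Sig 0) ≤ 0 :=
      div_nonpos_of_nonpos_of_nonneg hT hNrm0
    have h2 : Real.sqrt ((Sig 0).trace / specNorm (Sig 0)) = 0 :=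
      Real.sqrt_eq_zero_of_nonpos h1
    rw [h2, mul_zero] at hγ1C
    linarith
  -- the entrywise bounds
  have hEntSpec : ∀ m : ℕ, 1 ≤ m → ∀ i j : Fin p,
      |Sig m i j| ≤ κ * (γ3 * Real.sqrt (specNorm (Sig 0)) * Real.exp (-γ4 * ((m : ℝ) - 1))) := by
    intro m hm i j
    obtain ⟨Yt, hind, hid, hbound⟩ := hA3 1
    have hk : (1 : ℤ) < 1 + (m : ℤ) := by omega
    have hIDj := coord_identDistrib Y Yt haem hid (1 + (m : ℤ)) hk
    have hZmem : MemLp (fun ω => Y (1 + (m : ℤ)) ω j - Yt (1 + (m : ℤ)) ω j)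
        (ENNReal.ofReal (1 + ε)) μ :=
      (hmemLp _ j _ hε1).sub ((hIDj j).symm.memLp_snd (hmemLp _ j _ hε1))
    have hgmem : MemLp (fun ω => |Y (1 + (m : ℤ)) ω j - Yt (1 + (m : ℤ)) ω j|)
        (ENNReal.ofReal (1 + ε)) μ := by
      simpa [Real.norm_eq_abs] using hZmem.norm
    have hent := entry_est Y Yt hε hpq haem hmemLp hmem2 hmean hind hid (1 + (m : ℤ)) hk i j
      (fun ω => |Y (1 + (m : ℤ)) ω j - Yt (1 + (m : ℤ)) ω j|) (fun ω => abs_nonneg _)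
      (fun ω => le_refl _) hgmem
    have hb := hbound (1 + (m : ℤ)) (by omega) (Pi.single j 1) (vnorm_single j)
    have hdot : (fun ω => dotp (fun i' => Y (1 + (m : ℤ)) ω i' - Yt (1 + (m : ℤ)) ω i')
        (Pi.single j 1)) = fun ω => Y (1 + (m : ℤ)) ω j - Yt (1 + (m : ℤ)) ω j := by
      funext ω
      rw [dotp]
      rw [Finset.sum_eq_single j]
      · simp
      · intro b _ hb'
        simp [Pi.single_apply, hb']
      · intro hj
        exact absurd (Finset.mem_univ j) hj
    rw [hdot] at hb
    have hcast : ((1 + (m : ℤ) : ℤ) : ℝ) - ((1 : ℤ) : ℝ) - 1 = (m : ℝ) - 1 := by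
      push_cast; ring
    rw [hcast] at hb
    have hLqeq : Lq μ (1 + ε) (fun ω => |Y (1 + (m : ℤ)) ω j - Yt (1 + (m : ℤ)) ω j|)
        = Lq μ (1 + ε) (fun ω => Y (1 + (m : ℤ)) ω j - Yt (1 + (m : ℤ)) ω j) := by
      rw [Lq, Lq]
      simp_rw [abs_abs]
    calc |Sig m i j| = |∫ ω, Y 1 ω i * Y (1 + (m : ℤ)) ω j ∂μ| := by rw [hSig' m i j]
    _ ≤ Lq μ ((1 + ε) / ε) (fun ω => Y 1 ω i)
        * Lq μ (1 + ε) (fun ω => |Y (1 + (m : ℤ)) ω j - Yt (1 + (m : ℤ)) ω j|) := hent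
    _ ≤ κ * (γ3 * Real.sqrt (specNorm (Sig 0)) * Real.exp (-γ4 * ((m : ℝ) - 1))) := by
        refine mul_le_mul (hκ i) ?_ (Lq_nonneg _ _) hκ0
        rw [hLqeq]
        exact hb
  have hEntNuc : ∀ m : ℕ, 1 ≤ m → ∀ i j : Fin p,
      |Sig m i j| ≤ κ * (γ1 * Real.sqrt (specNorm (Sig 0)) * Real.exp (-γ2 * ((m : ℝ) - 1))) := by
    intro m hm i j
    obtain ⟨Yt, hind, hid, hbound⟩ := hA2 1
    have hk : (1 : ℤ) < 1 + (m : ℤ) := by omega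
    have hIDj := coord_identDistrib Y Yt haem hid (1 + (m : ℤ)) hk
    have hZmem : ∀ i' : Fin p, MemLp (fun ω => Y (1 + (m : ℤ)) ω i' - Yt (1 + (m : ℤ)) ω i')
        (ENNReal.ofReal (1 + ε)) μ := fun i' =>
      (hmemLp _ i' _ hε1).sub ((hIDj i').symm.memLp_snd (hmemLp _ i' _ hε1))
    have habs_mem : ∀ i' : Fin p, MemLp
        (fun ω => |Y (1 + (m : ℤ)) ω i' - Yt (1 + (m : ℤ)) ω i'|)
        (ENNReal.ofReal (1 + ε)) μ := fun i' => by
      simpa [Real.norm_eq_abs] using (hZmem i').norm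
    have hsum_mem : MemLp (fun ω => ∑ i' : Fin p, |Y (1 + (m : ℤ)) ω i' - Yt (1 + (m : ℤ)) ω i'|)
        (ENNReal.ofReal (1 + ε)) μ :=
      memLp_finset_sum Finset.univ fun i' _ => habs_mem i'
    have haemZ : ∀ i' : Fin p, AEMeasurable
        (fun ω => Y (1 + (m : ℤ)) ω i' - Yt (1 + (m : ℤ)) ω i') μ := fun i' =>
      (haem _ i').sub (hIDj i').aemeasurable_fst
    have hgaesm : AEStronglyMeasurable
        (fun ω => vnorm (fun i' => Y (1 + (m : ℤ)) ω i' - Yt (1 + (m : ℤ)) ω i')) μ := by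
      have h1 : AEMeasurable
          (fun ω => ∑ i' : Fin p, (Y (1 + (m : ℤ)) ω i' - Yt (1 + (m : ℤ)) ω i') ^ 2) μ := by
        refine Finset.aemeasurable_fun_sum _ fun i' _ => ?_
        have heq5 : (fun ω => (Y (1 + (m : ℤ)) ω i' - Yt (1 + (m : ℤ)) ω i') ^ 2)
            = fun ω => (Y (1 + (m : ℤ)) ω i' - Yt (1 + (m : ℤ)) ω i')
              * (Y (1 + (m : ℤ)) ω i' - Yt (1 + (m : ℤ)) ω i') := by
          funext ω; ring
        rw [heq5]
        exact (haemZ i').mul (haemZ i')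
      exact ((Measurable.comp_aemeasurable Real.continuous_sqrt.measurable h1)).aestronglyMeasurable
    have hgmem : MemLp (fun ω => vnorm (fun i' => Y (1 + (m : ℤ)) ω i' - Yt (1 + (m : ℤ)) ω i'))
        (ENNReal.ofReal (1 + ε)) μ := by
      refine MemLp.of_le hsum_mem hgaesm (ae_of_all _ fun ω => ?_)
      rw [Real.norm_eq_abs, Real.norm_eq_abs, abs_of_nonneg (vnorm_nonneg' _),
        abs_of_nonneg (Finset.sum_nonneg fun i' _ => abs_nonneg _)]
      exact vnorm_le_sum_abs _
    have hent := entry_est Y Yt hε hpq haem hmemLp hmem2 hmean hind hid (1 + (m : ℤ)) hk i j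
      (fun ω => vnorm (fun i' => Y (1 + (m : ℤ)) ω i' - Yt (1 + (m : ℤ)) ω i'))
      (fun ω => vnorm_nonneg' _)
      (fun ω => by
        simpa using abs_le_vnorm (fun i' => Y (1 + (m : ℤ)) ω i' - Yt (1 + (m : ℤ)) ω i') j)
      hgmem
    have hb := hbound (1 + (m : ℤ)) (by omega)
    have hcast : ((1 + (m : ℤ) : ℤ) : ℝ) - ((1 : ℤ) : ℝ) - 1 = (m : ℝ) - 1 := by
      push_cast; ring
    rw [hcast] at hb
    calc |Sig m i j| = |∫ ω, Y 1 ω i * Y (1 + (m : ℤ)) ω j ∂μ| := by rw [hSig' m i j]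
    _ ≤ Lq μ ((1 + ε) / ε) (fun ω => Y 1 ω i)
        * Lq μ (1 + ε) (fun ω => vnorm (fun i' => Y (1 + (m : ℤ)) ω i' - Yt (1 + (m : ℤ)) ω i')) :=
        hent
    _ ≤ κ * (γ1 * Real.sqrt (specNorm (Sig 0)) * Real.exp (-γ2 * ((m : ℝ) - 1))) :=
        mul_le_mul (hκ i) hb (Lq_nonneg _ _) hκ0
  -- assemble the constants
  refine ⟨(p : ℝ) * p * κ * γ3 * Real.sqrt (specNorm (Sig 0)) / specNorm (Sig 0) + 1,
    (p : ℝ) * p * κ * γ1 * Real.sqrt (specNorm (Sig 0)) / (Sig 0).trace + 1, ?_, ?_, ?_⟩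
  · have h1 : 0 ≤ (p : ℝ) * p * κ * γ3 * Real.sqrt (specNorm (Sig 0)) / specNorm (Sig 0) := by
      apply div_nonneg _ hNrm0
      have : (0:ℝ) ≤ (p : ℝ) := by positivity
      positivity
    linarith
  · have h1 : 0 ≤ (p : ℝ) * p * κ * γ1 * Real.sqrt (specNorm (Sig 0)) / (Sig 0).trace := by
      apply div_nonneg _ hTpos.le
      positivity
    linarith
  · intro m hm
    constructor
    · calc specNorm (Sig m) ≤ ∑ i, ∑ j, |Sig m i j| := specNorm_le_sum_abs _
      _ ≤ ∑ _i : Fin p, ∑ _j : Fin p,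
            κ * (γ3 * Real.sqrt (specNorm (Sig 0)) * Real.exp (-γ4 * ((m : ℝ) - 1))) :=
          Finset.sum_le_sum fun i _ => Finset.sum_le_sum fun j _ => hEntSpec m hm i j
      _ = (p : ℝ) * p * κ * γ3 * Real.sqrt (specNorm (Sig 0)) * Real.exp (-γ4 * ((m : ℝ) - 1)) := by
          rw [Finset.sum_const, Finset.sum_const, Finset.card_univ, Fintype.card_fin,
            nsmul_eq_mul, nsmul_eq_mul]
          ring
      _ ≤ ((p : ℝ) * p * κ * γ3 * Real.sqrt (specNorm (Sig 0)) / specNorm (Sig 0) + 1)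
            * specNorm (Sig 0) * Real.exp (-γ4 * ((m : ℝ) - 1)) := by
          have hCN : ((p : ℝ) * p * κ * γ3 * Real.sqrt (specNorm (Sig 0)) / specNorm (Sig 0) + 1)
              * specNorm (Sig 0)
              = (p : ℝ) * p * κ * γ3 * Real.sqrt (specNorm (Sig 0)) + specNorm (Sig 0) := by
            field_simp
          rw [hCN]
          refine mul_le_mul_of_nonneg_right ?_ (Real.exp_nonneg _)
          linarith
    · calc nucNorm (Sig m) ≤ ∑ i, ∑ j, |Sig m i j| := nucNorm_le_sum_abs _
      _ ≤ ∑ _i : Fin p, ∑ _j : Fin p,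
            κ * (γ1 * Real.sqrt (specNorm (Sig 0)) * Real.exp (-γ2 * ((m : ℝ) - 1))) :=
          Finset.sum_le_sum fun i _ => Finset.sum_le_sum fun j _ => hEntNuc m hm i j
      _ = (p : ℝ) * p * κ * γ1 * Real.sqrt (specNorm (Sig 0)) * Real.exp (-γ2 * ((m : ℝ) - 1)) := by
          rw [Finset.sum_const, Finset.sum_const, Finset.card_univ, Fintype.card_fin,
            nsmul_eq_mul, nsmul_eq_mul]
          ring
      _ ≤ ((p : ℝ) * p * κ * γ1 * Real.sqrt (specNorm (Sig 0)) / (Sig 0).trace + 1)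
            * (Sig 0).trace * Real.exp (-γ2 * ((m : ℝ) - 1)) := by
          have hCN : ((p : ℝ) * p * κ * γ1 * Real.sqrt (specNorm (Sig 0)) / (Sig 0).trace + 1)
              * (Sig 0).trace
              = (p : ℝ) * p * κ * γ1 * Real.sqrt (specNorm (Sig 0)) + (Sig 0).trace := by
            field_simp
          rw [hCN]
          refine mul_le_mul_of_nonneg_right ?_ (Real.exp_nonneg _)
          linarith

end AutoCov

end
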